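/- Let B : ℝ → ℂ be bounded and C¹ with B' ∈ L¹(ℝ). Then there is C > 0 depending only on ‖B‖_{L∞} and ‖B'‖_{L¹} such that for all t ≥ 1, ρ ≥ 0, φ ∈ ℝ, |∫₀^{π} e^{i t sin θ} B(ρ cos(θ − φ)) dθ| ≤ C t^{−1/2}. -/

import Mathlib

open MeasureTheory Complex
open Real


private lemma SPB_hasDerivAt_comp_f (B : ℝ → ℂ) (hB : ContDiff ℝ 1 B) (ρ φ θ : ℝ) :
    HasDerivAt (fun θ => B (ρ * Real.cos (θ - φ)))
      ((ρ * -Real.sin (θ - φ)) • deriv B (ρ * Real.cos (θ - φ))) θ := by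
  have hg : HasDerivAt (fun θ => ρ * Real.cos (θ - φ)) (ρ * -Real.sin (θ - φ)) θ := by
    have h1 : HasDerivAt (fun θ : ℝ => θ - φ) 1 θ := (hasDerivAt_id θ).sub_const φ
    have h2 := (Real.hasDerivAt_cos (θ - φ)).comp θ h1
    simpa using h2.const_mul ρ
  have hb : HasDerivAt B (deriv B (ρ * Real.cos (θ - φ))) (ρ * Real.cos (θ - φ)) :=
    (hB.differentiable one_ne_zero (ρ * Real.cos (θ - φ))).hasDerivAt
  exact HasDerivAt.scomp θ hb hg

lemma SPB_fL1 (B : ℝ → ℂ) (hB : ContDiff ℝ 1 B) (hB' : Integrable (deriv B))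
    (ρ : ℝ) (hρ : 0 ≤ ρ) (φ : ℝ) :
    ∫ θ in (0:ℝ)..Real.pi, ‖(ρ * -Real.sin (θ - φ)) • deriv B (ρ * Real.cos (θ - φ))‖
      ≤ 2 * ∫ x : ℝ, ‖deriv B x‖ := by
  have hgc : Continuous (fun x : ℝ => ‖deriv B x‖) := (hB.continuous_deriv le_rfl).norm
  set g : ℝ → ℝ := fun x => ‖deriv B x‖ with hg
  set h : ℝ → ℝ := fun u => ρ * |Real.sin u| * g (ρ * Real.cos u) with hh
  have hhc : Continuous h := by
    apply Continuous.mul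
    · exact continuous_const.mul Real.continuous_sin.abs
    · exact hgc.comp (continuous_const.mul Real.continuous_cos)
  have hnonneg : ∀ u, 0 ≤ h u := by
    intro u
    apply mul_nonneg (mul_nonneg hρ (abs_nonneg _)) (norm_nonneg _)
  have step1 : ∀ θ : ℝ, ‖(ρ * -Real.sin (θ - φ)) • deriv B (ρ * Real.cos (θ - φ))‖ = h (θ - φ) := by
    intro θ
    rw [norm_smul, Real.norm_eq_abs, abs_mul, abs_neg, _root_.abs_of_nonneg hρ]
  have hper : Function.Periodic h (2 * Real.pi) := by
    intro u
    simp only [hh, Real.sin_add_two_pi, Real.cos_add_two_pi]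
  calc ∫ θ in (0:ℝ)..Real.pi, ‖(ρ * -Real.sin (θ - φ)) • deriv B (ρ * Real.cos (θ - φ))‖
      = ∫ θ in (0:ℝ)..Real.pi, h (θ - φ) := by simp_rw [step1]
    _ = ∫ u in (0 - φ)..(Real.pi - φ), h u := intervalIntegral.integral_comp_sub_right h φ
    _ ≤ ∫ u in (-φ)..(-φ + 2 * Real.pi), h u := by
        apply intervalIntegral.integral_mono_interval (by linarith) (by linarith [Real.pi_pos])
          (by linarith [Real.pi_pos])
        · filter_upwards with u using hnonneg u
        · exact hhc.intervalIntegrable _ _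
    _ = ∫ u in (-Real.pi)..(-Real.pi + 2 * Real.pi), h u := hper.intervalIntegral_add_eq _ _
    _ = ∫ u in (-Real.pi)..Real.pi, h u := by norm_num [neg_add_eq_sub]; ring_nf
    _ = (∫ u in (-Real.pi)..(0:ℝ), h u) + ∫ u in (0:ℝ)..Real.pi, h u :=
        (intervalIntegral.integral_add_adjacent_intervals (hhc.intervalIntegrable _ _)
          (hhc.intervalIntegrable _ _)).symm
    _ = (∫ u in (0:ℝ)..Real.pi, h u) + ∫ u in (0:ℝ)..Real.pi, h u := by
        congr 1
        have := intervalIntegral.integral_comp_neg (a := (0:ℝ)) (b := Real.pi) h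
        simp only [neg_zero] at this
        rw [← this]
        apply intervalIntegral.integral_congr
        intro u _
        simp [hh]
    _ = 2 * ∫ u in (0:ℝ)..Real.pi, h u := by ring
    _ ≤ 2 * ∫ x : ℝ, g x := by
        have key : ∫ u in (0:ℝ)..Real.pi, h u = ∫ v in (-ρ)..ρ, g v := by
          have heq : Set.EqOn h (fun u => (-(ρ * Real.sin u)) • ((g ∘ fun u => ρ * Real.cos u) u) * (-1))
              (Set.uIcc 0 Real.pi) := by
            intro u hu
            rw [Set.uIcc_of_le Real.pi_pos.le] at hu
            have : |Real.sin u| = Real.sin u := abs_of_nonneg (Real.sin_nonneg_of_nonneg_of_le_pi hu.1 hu.2)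
            simp only [hh, this, smul_eq_mul, Function.comp]
            ring
          rw [intervalIntegral.integral_congr heq]
          have hderiv : ∀ x ∈ Set.uIcc (0:ℝ) Real.pi,
              HasDerivAt (fun u => ρ * Real.cos u) (-(ρ * Real.sin x)) x := by
            intro x _
            simpa [mul_comm, neg_mul, mul_neg] using (Real.hasDerivAt_cos x).const_mul ρ
          have hcv := intervalIntegral.integral_comp_smul_deriv hderiv
            (Continuous.continuousOn (by continuity)) hgc
          simp only [intervalIntegral.integral_mul_const]
          rw [hcv]
          simp only [Real.cos_zero, Real.cos_pi, mul_one, mul_neg_one]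
          rw [intervalIntegral.integral_symm (-ρ) ρ, neg_neg]
        rw [key]
        gcongr
        rw [intervalIntegral.integral_of_le (by linarith : -ρ ≤ ρ)]
        exact setIntegral_le_integral hB'.norm (by filter_upwards with x using norm_nonneg _)


lemma SPB_side_bound (B : ℝ → ℂ) (hB : ContDiff ℝ 1 B) (M : ℝ) (hM : ∀ x, ‖B x‖ ≤ M)
    (t : ℝ) (ht : 1 ≤ t) (ρ : ℝ) (hρ : 0 ≤ ρ) (φ δ L : ℝ)
    (hδ0 : 0 < δ) (hδ1 : δ ≤ 1) (hL0 : 0 ≤ L)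
    (hL1 : ∫ θ in (0:ℝ)..Real.pi, ‖(ρ * -Real.sin (θ - φ)) • deriv B (ρ * Real.cos (θ - φ))‖
      ≤ 2 * L) :
    ‖∫ θ in (0:ℝ)..(Real.pi/2 - δ),
        Complex.exp (Complex.I * (t:ℂ) * (Real.sin θ : ℂ)) * B (ρ * Real.cos (θ - φ))‖
      ≤ (3*M + 2*L) / (t * Real.sin δ) := by
  have pi_gt : (3:ℝ) < Real.pi := Real.pi_gt_three
  set a : ℝ := Real.pi/2 - δ with ha_def
  clear_value a
  have ha0 : 0 < a := by rw [ha_def]; linarith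
  have haπ : a < Real.pi/2 := by rw [ha_def]; linarith
  have hS : 0 < Real.sin δ := Real.sin_pos_of_pos_of_lt_pi hδ0 (by linarith)
  set S : ℝ := Real.sin δ with hS_def
  clear_value S
  have hcos_lb : ∀ θ ∈ Set.Icc (0:ℝ) a, S ≤ Real.cos θ := by
    intro θ hθ
    have h1 : Real.cos a ≤ Real.cos θ :=
      Real.cos_le_cos_of_nonneg_of_le_pi hθ.1 (by linarith) hθ.2
    have hca : Real.cos a = S := by
      rw [ha_def, hS_def]; exact Real.cos_pi_div_two_sub δ
    linarith
  have ht0 : (0:ℝ) < t := by linarith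
  have hM0 : 0 ≤ M := le_trans (norm_nonneg _) (hM 0)
  -- definitions
  set f : ℝ → ℂ := fun θ => B (ρ * Real.cos (θ - φ)) with hf_def
  set fd : ℝ → ℂ := fun θ => (ρ * -Real.sin (θ - φ)) • deriv B (ρ * Real.cos (θ - φ)) with hfd_def
  set c : ℝ → ℂ := fun θ => ((Real.cos θ : ℝ) : ℂ) with hc_def
  set u : ℝ → ℂ := fun θ => f θ * (c θ)⁻¹ with hu_def
  set u' : ℝ → ℂ := fun θ => fd θ * (c θ)⁻¹ + f θ * ((Real.sin θ : ℂ) * ((c θ)^2)⁻¹) with hu'_def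
  set v : ℝ → ℂ := fun θ => (Complex.I * t)⁻¹ * Complex.exp (Complex.I * t * Real.sin θ) with hv_def
  set v' : ℝ → ℂ := fun θ => c θ * Complex.exp (Complex.I * t * Real.sin θ) with hv'_def
  have hIt : (Complex.I * t) ≠ 0 :=
    mul_ne_zero Complex.I_ne_zero (by exact_mod_cast ne_of_gt ht0)
  have hcne : ∀ θ ∈ Set.Icc (0:ℝ) a, c θ ≠ 0 := by
    intro θ hθ
    simp only [hc_def, ne_eq, Complex.ofReal_eq_zero]
    have := hcos_lb θ hθ; intro h; rw [h] at this; linarith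
  have huIcc : Set.uIcc (0:ℝ) a = Set.Icc 0 a := Set.uIcc_of_le ha0.le
  -- derivative facts
  have hfD : ∀ θ : ℝ, HasDerivAt f (fd θ) θ := by
    intro θ
    have hg : HasDerivAt (fun θ => ρ * Real.cos (θ - φ)) (ρ * -Real.sin (θ - φ)) θ := by
      have h1 : HasDerivAt (fun θ : ℝ => θ - φ) 1 θ := (hasDerivAt_id θ).sub_const φ
      simpa using ((Real.hasDerivAt_cos (θ - φ)).comp θ h1).const_mul ρ
    exact HasDerivAt.scomp θ
      ((hB.differentiable one_ne_zero (ρ * Real.cos (θ - φ))).hasDerivAt) hg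
  have hvd : ∀ θ : ℝ, HasDerivAt v (v' θ) θ := by
    intro θ
    have h1 : HasDerivAt (fun θ:ℝ => ((Real.sin θ : ℝ):ℂ)) ((Real.cos θ : ℝ):ℂ) θ :=
      (Real.hasDerivAt_sin θ).ofReal_comp
    have h2 := (h1.const_mul (Complex.I * t)).cexp
    have h3 := h2.const_mul ((Complex.I * t)⁻¹)
    refine h3.congr_deriv ?_
    simp only [hv'_def, hc_def]
    field_simp
    rw [mul_comm (t:ℂ), mul_div_cancel_right₀ _ (Complex.ofReal_ne_zero.2 ht0.ne')]
  have hud : ∀ θ ∈ Set.uIcc (0:ℝ) a, HasDerivAt u (u' θ) θ := by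
    intro θ hθ
    rw [huIcc] at hθ
    have hcθ : HasDerivAt c (((-Real.sin θ : ℝ)):ℂ) θ := (Real.hasDerivAt_cos θ).ofReal_comp
    have hinv : HasDerivAt (fun x => (c x)⁻¹)
        ((((-Real.sin θ : ℝ)):ℂ) • (-((c θ) ^ 2)⁻¹)) θ :=
      HasDerivAt.scomp θ (hasDerivAt_inv (hcne θ hθ)) hcθ
    have := (hfD θ).mul hinv
    refine this.congr_deriv ?_
    simp only [hu'_def, hc_def, smul_eq_mul]
    push_cast
    ring
  -- continuity / integrability
  have hgc : Continuous (fun θ => ρ * Real.cos (θ - φ)) :=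
    continuous_const.mul (Real.continuous_cos.comp (continuous_id.sub continuous_const))
  have hfc : Continuous f := hB.continuous.comp hgc
  have hfdc : Continuous fd := by
    refine Continuous.smul (f := fun θ => ρ * -Real.sin (θ - φ))
      (g := fun θ => deriv B (ρ * Real.cos (θ - φ))) ?_ ?_
    · exact continuous_const.mul
        ((Real.continuous_sin.comp (continuous_id.sub continuous_const)).neg)
    · exact (hB.continuous_deriv le_rfl).comp hgc
  have hcc : Continuous c := Complex.continuous_ofReal.comp Real.continuous_cos
  have hec : Continuous (fun θ : ℝ => Complex.exp (Complex.I * t * Real.sin θ)) :=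
    Complex.continuous_exp.comp
      (continuous_const.mul (Complex.continuous_ofReal.comp Real.continuous_sin))
  have hcinvC : ContinuousOn (fun θ => (c θ)⁻¹) (Set.Icc 0 a) :=
    ContinuousOn.inv₀ hcc.continuousOn hcne
  have hu'c : ContinuousOn u' (Set.Icc 0 a) := by
    apply ContinuousOn.add
    · exact hfdc.continuousOn.mul hcinvC
    · apply hfc.continuousOn.mul
      apply ContinuousOn.mul
      · exact (Complex.continuous_ofReal.comp Real.continuous_sin).continuousOn
      · exact ContinuousOn.inv₀ (hcc.pow 2).continuousOn
          (fun θ hθ => pow_ne_zero 2 (hcne θ hθ))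
  have hu'int : IntervalIntegrable u' volume 0 a := by
    rw [intervalIntegrable_iff_integrableOn_Icc_of_le ha0.le]
    exact hu'c.integrableOn_compact isCompact_Icc
  have hv'int : IntervalIntegrable v' volume 0 a :=
    (hcc.mul hec).intervalIntegrable _ _
  -- IBP
  have hIBP := intervalIntegral.integral_mul_deriv_eq_deriv_mul hud
    (fun θ _ => hvd θ) hu'int hv'int
  have hcongr : ∫ θ in (0:ℝ)..a,
      Complex.exp (Complex.I * (t:ℂ) * (Real.sin θ : ℂ)) * B (ρ * Real.cos (θ - φ))
      = ∫ θ in (0:ℝ)..a, u θ * v' θ := by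
    apply intervalIntegral.integral_congr
    intro θ hθ
    rw [huIcc] at hθ
    simp only [hu_def, hv'_def, hf_def]
    field_simp [hcne θ hθ]
  -- norms
  have hexp1 : ∀ θ : ℝ, ‖Complex.exp (Complex.I * t * Real.sin θ)‖ = 1 := by
    intro θ
    have h1 : Complex.I * t * Real.sin θ = ((t * Real.sin θ : ℝ) : ℂ) * Complex.I := by
      push_cast; ring
    rw [h1, Complex.norm_exp_ofReal_mul_I]
  have hvnorm : ∀ θ : ℝ, ‖v θ‖ = t⁻¹ := by
    intro θ
    simp only [hv_def]
    rw [norm_mul, hexp1, norm_inv, norm_mul, Complex.norm_I, one_mul, Complex.norm_real,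
      Real.norm_eq_abs, abs_of_pos ht0, mul_one]
  have hunorm : ∀ θ ∈ Set.Icc (0:ℝ) a, ‖u θ‖ ≤ M / S := by
    intro θ hθ
    simp only [hu_def]
    rw [norm_mul, norm_inv]
    have hcn : ‖c θ‖ = Real.cos θ := by
      simp only [hc_def, Complex.norm_real, Real.norm_eq_abs]
      exact abs_of_pos (lt_of_lt_of_le hS (hcos_lb θ hθ))
    rw [hcn, div_eq_mul_inv]
    exact mul_le_mul (hM _) (inv_anti₀ hS (hcos_lb θ hθ))
      (inv_nonneg.2 (le_of_lt (lt_of_lt_of_le hS (hcos_lb θ hθ)))) hM0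
  -- bound on the remainder integral
  have hW : ∀ θ ∈ Set.Icc (0:ℝ) a, ‖u' θ * v θ‖ ≤
      (‖fd θ‖ / S + M * (Real.sin θ / (Real.cos θ)^2)) * t⁻¹ := by
    intro θ hθ
    rw [norm_mul, hvnorm]
    apply mul_le_mul_of_nonneg_right _ (inv_nonneg.2 ht0.le)
    have hcθ : S ≤ Real.cos θ := hcos_lb θ hθ
    have hc0 : 0 < Real.cos θ := lt_of_lt_of_le hS hcθ
    have hsθ : 0 ≤ Real.sin θ := Real.sin_nonneg_of_nonneg_of_le_pi hθ.1 (by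
      have := hθ.2; rw [ha_def] at this; linarith)
    have hcn : ‖c θ‖ = Real.cos θ := by
      simp only [hc_def, Complex.norm_real, Real.norm_eq_abs]
      exact abs_of_pos hc0
    calc ‖u' θ‖ ≤ ‖fd θ * (c θ)⁻¹‖ + ‖f θ * ((Real.sin θ : ℂ) * ((c θ)^2)⁻¹)‖ :=
          norm_add_le _ _
      _ = ‖fd θ‖ * (Real.cos θ)⁻¹ + ‖f θ‖ * (Real.sin θ * ((Real.cos θ)^2)⁻¹) := by
          rw [norm_mul, norm_inv, hcn, norm_mul, norm_mul, norm_inv, norm_pow, hcn,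
            Complex.norm_real, Real.norm_eq_abs, _root_.abs_of_nonneg hsθ]
      _ ≤ ‖fd θ‖ * S⁻¹ + M * (Real.sin θ * ((Real.cos θ)^2)⁻¹) := by
          gcongr
          · exact hM _
      _ = ‖fd θ‖ / S + M * (Real.sin θ / (Real.cos θ)^2) := by
          rw [div_eq_mul_inv, div_eq_mul_inv]
  -- the elementary integral of sin/cos^2
  have hsc : ∫ θ in (0:ℝ)..a, Real.sin θ / (Real.cos θ)^2 = (Real.cos a)⁻¹ - 1 := by
    have hder : ∀ θ ∈ Set.uIcc (0:ℝ) a,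
        HasDerivAt (fun θ => (Real.cos θ)⁻¹) (Real.sin θ / (Real.cos θ)^2) θ := by
      intro θ hθ
      rw [huIcc] at hθ
      have hc0 : Real.cos θ ≠ 0 := ne_of_gt (lt_of_lt_of_le hS (hcos_lb θ hθ))
      have := (Real.hasDerivAt_cos θ).inv hc0
      refine this.congr_deriv ?_
      ring
    have hint : IntervalIntegrable (fun θ => Real.sin θ / (Real.cos θ)^2) volume 0 a := by
      rw [intervalIntegrable_iff_integrableOn_Icc_of_le ha0.le]
      apply ContinuousOn.integrableOn_compact isCompact_Icc
      apply ContinuousOn.div Real.continuous_sin.continuousOn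
        (Real.continuous_cos.pow 2).continuousOn
      intro θ hθ
      exact pow_ne_zero 2 (ne_of_gt (lt_of_lt_of_le hS (hcos_lb θ hθ)))
    rw [intervalIntegral.integral_eq_sub_of_hasDerivAt hder hint, Real.cos_zero, inv_one]
  have hca : Real.cos a = S := by rw [ha_def, hS_def]; exact Real.cos_pi_div_two_sub δ
  have hfdL : ∫ θ in (0:ℝ)..a, ‖fd θ‖ ≤ 2 * L := by
    refine le_trans ?_ hL1
    apply intervalIntegral.integral_mono_interval le_rfl ha0.le (by rw [ha_def]; linarith)
    · filter_upwards with x using norm_nonneg _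
    · exact hfdc.norm.intervalIntegrable _ _
  -- assemble
  rw [hcongr, hIBP]
  have hrem : ‖∫ θ in (0:ℝ)..a, u' θ * v θ‖ ≤ (2*L + M) / (t * S) := by
    calc ‖∫ θ in (0:ℝ)..a, u' θ * v θ‖ ≤ ∫ θ in (0:ℝ)..a, ‖u' θ * v θ‖ :=
        intervalIntegral.norm_integral_le_integral_norm ha0.le
      _ ≤ ∫ θ in (0:ℝ)..a, (‖fd θ‖ / S + M * (Real.sin θ / (Real.cos θ)^2)) * t⁻¹ := by
          apply intervalIntegral.integral_mono_on ha0.le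
          · apply ContinuousOn.intervalIntegrable
            rw [huIcc]
            exact (hu'c.mul (Continuous.continuousOn (by
              exact continuous_const.mul hec))).norm
          · apply ContinuousOn.intervalIntegrable
            rw [huIcc]
            apply ContinuousOn.mul _ continuousOn_const
            apply ContinuousOn.add
            · exact (hfdc.norm.continuousOn.div continuousOn_const (fun x _ => ne_of_gt hS))
            · apply ContinuousOn.mul continuousOn_const
              apply ContinuousOn.div Real.continuous_sin.continuousOn
                (Real.continuous_cos.pow 2).continuousOn
              intro θ hθ
              exact pow_ne_zero 2 (ne_of_gt (lt_of_lt_of_le hS (hcos_lb θ hθ)))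
          · exact hW
      _ = ((∫ θ in (0:ℝ)..a, ‖fd θ‖) / S + M * ∫ θ in (0:ℝ)..a, Real.sin θ / (Real.cos θ)^2)
            * t⁻¹ := by
          rw [intervalIntegral.integral_mul_const]
          congr 1
          rw [intervalIntegral.integral_add]
          · rw [intervalIntegral.integral_div (S:ℝ) (fun θ => ‖fd θ‖),
              intervalIntegral.integral_const_mul]
          · apply ContinuousOn.intervalIntegrable
            rw [huIcc]
            exact hfdc.norm.continuousOn.div continuousOn_const (fun x _ => ne_of_gt hS)
          · apply ContinuousOn.intervalIntegrable
            rw [huIcc]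
            apply ContinuousOn.mul continuousOn_const
            apply ContinuousOn.div Real.continuous_sin.continuousOn
              (Real.continuous_cos.pow 2).continuousOn
            intro θ hθ
            exact pow_ne_zero 2 (ne_of_gt (lt_of_lt_of_le hS (hcos_lb θ hθ)))
      _ ≤ ((2*L) / S + M * ((Real.cos a)⁻¹ - 1)) * t⁻¹ := by
          rw [hsc]
          gcongr
      _ ≤ ((2*L) / S + M * S⁻¹) * t⁻¹ := by
          rw [hca]
          apply mul_le_mul_of_nonneg_right _ (inv_nonneg.2 ht0.le)
          have hmono : M * (S⁻¹ - 1) ≤ M * S⁻¹ := by nlinarith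
          linarith
      _ = (2*L + M) / (t * S) := by
          field_simp
  have hbd1 : ‖u a * v a‖ ≤ M / (t * S) := by
    rw [norm_mul, hvnorm]
    have := hunorm a ⟨ha0.le, le_refl a⟩
    calc ‖u a‖ * t⁻¹ ≤ (M / S) * t⁻¹ := by gcongr
      _ = M / (t * S) := by field_simp
  have hbd0 : ‖u 0 * v 0‖ ≤ M / (t * S) := by
    rw [norm_mul, hvnorm]
    have := hunorm 0 ⟨le_refl 0, ha0.le⟩
    calc ‖u 0‖ * t⁻¹ ≤ (M / S) * t⁻¹ := by gcongr
      _ = M / (t * S) := by field_simp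
  calc ‖u a * v a - u 0 * v 0 - ∫ θ in (0:ℝ)..a, u' θ * v θ‖
      ≤ ‖u a * v a - u 0 * v 0‖ + ‖∫ θ in (0:ℝ)..a, u' θ * v θ‖ := norm_sub_le _ _
    _ ≤ (‖u a * v a‖ + ‖u 0 * v 0‖) + ‖∫ θ in (0:ℝ)..a, u' θ * v θ‖ := by
        gcongr; exact norm_sub_le _ _
    _ ≤ (M / (t*S) + M / (t*S)) + (2*L + M) / (t*S) := by gcongr
    _ = (3*M + 2*L) / (t * S) := by rw [← add_div, ← add_div]; ring_nf

/-- Stationary-phase bound: for `B : ℝ → ℂ` bounded, `C¹`, with `B' ∈ L¹(ℝ)`,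
there is `C > 0` (depending only on `‖B‖_{L∞}` and `‖B'‖_{L¹}`) such that for all
`t ≥ 1`, `ρ ≥ 0`, `φ ∈ ℝ`:
`|∫₀^π e^{i t sin θ} B(ρ cos(θ − φ)) dθ| ≤ C t^{−1/2}`. -/
theorem stationary_phase_bound (B : ℝ → ℂ)
    (hB : ContDiff ℝ 1 B) (hbdd : ∃ M : ℝ, ∀ x, ‖B x‖ ≤ M)
    (hB' : Integrable (deriv B)) :
    ∃ C > (0 : ℝ), ∀ t ≥ (1 : ℝ), ∀ ρ ≥ (0 : ℝ), ∀ φ : ℝ,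
      ‖∫ θ in (0 : ℝ)..Real.pi,
          Complex.exp (Complex.I * (t : ℂ) * (Real.sin θ : ℂ)) *
            B (ρ * Real.cos (θ - φ))‖ ≤ C * t ^ (-(1 : ℝ) / 2) := by
  obtain ⟨M, hM⟩ := hbdd
  have hM0 : 0 ≤ M := le_trans (norm_nonneg _) (hM 0)
  set L : ℝ := ∫ x : ℝ, ‖deriv B x‖ with hL_def
  have hL0 : 0 ≤ L := integral_nonneg fun x => norm_nonneg _
  refine ⟨10*M + 6*L + 1, by linarith, ?_⟩
  intro t ht ρ hρ φ
  have ht0 : (0:ℝ) < t := by linarith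
  have pi_gt : (3:ℝ) < Real.pi := Real.pi_gt_three
  set δ : ℝ := t ^ (-(1:ℝ)/2) with hδdef
  have hδ0 : 0 < δ := Real.rpow_pos_of_pos ht0 _
  have hδ1 : δ ≤ 1 := Real.rpow_le_one_of_one_le_of_nonpos ht (by norm_num)
  have hδδ : δ * δ = t⁻¹ := by
    rw [hδdef, ← Real.rpow_add ht0]
    norm_num
    exact Real.rpow_neg_one t
  have htδδ : t * (δ * δ) = 1 := by rw [hδδ]; field_simp
  clear_value δ
  have hS : 0 < Real.sin δ := Real.sin_pos_of_pos_of_lt_pi hδ0 (by linarith)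
  have hsin : (3/4)*δ < Real.sin δ := by
    have h := Real.sin_gt_sub_cube hδ0
    nlinarith [pow_le_one₀ hδ0.le hδ1 (n := 3), hδ0]
  -- the reflected function
  set B2 : ℝ → ℂ := fun x => B (-x) with hB2_def
  have hB2 : ContDiff ℝ 1 B2 := hB.comp contDiff_neg
  have hM2 : ∀ x, ‖B2 x‖ ≤ M := fun x => hM (-x)
  have hD2 : ∀ x : ℝ, HasDerivAt B2 (-(deriv B (-x))) x := by
    intro x
    have := HasDerivAt.scomp x ((hB.differentiable one_ne_zero (-x)).hasDerivAt) (hasDerivAt_neg x)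
    rw [neg_one_smul] at this
    exact this
  have hderiv2 : deriv B2 = fun x => -(deriv B (-x)) := funext fun x => (hD2 x).deriv
  have hB2' : Integrable (deriv B2) := by rw [hderiv2]; exact hB'.comp_neg.neg
  have hL2 : (∫ x : ℝ, ‖deriv B2 x‖) = L := by
    rw [hderiv2, hL_def]
    simp only [norm_neg]
    exact integral_neg_eq_self (fun x => ‖deriv B x‖) volume
  -- continuity of the integrand
  have hgc : ∀ ψ : ℝ, Continuous (fun θ => ρ * Real.cos (θ - ψ)) := fun ψ =>
    continuous_const.mul (Real.continuous_cos.comp (continuous_id.sub continuous_const))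
  have hec : Continuous (fun θ : ℝ => Complex.exp (Complex.I * t * Real.sin θ)) :=
    Complex.continuous_exp.comp
      (continuous_const.mul (Complex.continuous_ofReal.comp Real.continuous_sin))
  set F : ℝ → ℂ := fun θ =>
    Complex.exp (Complex.I * (t:ℂ) * (Real.sin θ : ℂ)) * B (ρ * Real.cos (θ - φ)) with hF_def
  have hFc : Continuous F := hec.mul (hB.continuous.comp (hgc φ))
  have hexp1 : ∀ θ : ℝ, ‖Complex.exp (Complex.I * t * Real.sin θ)‖ = 1 := by
    intro θ
    have h1 : Complex.I * t * Real.sin θ = ((t * Real.sin θ : ℝ) : ℂ) * Complex.I := by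
      push_cast; ring
    rw [h1, Complex.norm_exp_ofReal_mul_I]
  -- split the integral
  have e1 := intervalIntegral.integral_add_adjacent_intervals
    (hFc.intervalIntegrable (μ := volume) 0 (Real.pi/2 - δ)) (hFc.intervalIntegrable (μ := volume) (Real.pi/2 - δ) (Real.pi/2 + δ))
  have e2 := intervalIntegral.integral_add_adjacent_intervals
    (hFc.intervalIntegrable (μ := volume) 0 (Real.pi/2 + δ)) (hFc.intervalIntegrable (μ := volume) (Real.pi/2 + δ) Real.pi)
  have hsplit : ∫ θ in (0:ℝ)..Real.pi, F θ
      = (∫ θ in (0:ℝ)..(Real.pi/2 - δ), F θ)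
        + (∫ θ in (Real.pi/2 - δ)..(Real.pi/2 + δ), F θ)
        + ∫ θ in (Real.pi/2 + δ)..Real.pi, F θ := by
    rw [e1, e2]
  -- left piece
  have hleft : ‖∫ θ in (0:ℝ)..(Real.pi/2 - δ), F θ‖ ≤ (3*M + 2*L) / (t * Real.sin δ) :=
    SPB_side_bound B hB M hM t ht ρ hρ φ δ L hδ0 hδ1 hL0 (SPB_fL1 B hB hB' ρ hρ φ)
  -- middle piece
  have hmid : ‖∫ θ in (Real.pi/2 - δ)..(Real.pi/2 + δ), F θ‖ ≤ M * (2*δ) := by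
    have h := intervalIntegral.norm_integral_le_of_norm_le_const
      (C := M) (f := F) (a := Real.pi/2 - δ) (b := Real.pi/2 + δ) ?_
    · calc ‖∫ θ in (Real.pi/2 - δ)..(Real.pi/2 + δ), F θ‖
          ≤ M * |Real.pi/2 + δ - (Real.pi/2 - δ)| := h
        _ = M * (2*δ) := by rw [show Real.pi/2 + δ - (Real.pi/2 - δ) = 2*δ by ring,
            abs_of_pos (by linarith)]
    · intro x _
      rw [hF_def, norm_mul, hexp1, one_mul]
      exact hM _
  -- right piece via reflection
  have hrefl : (∫ θ in (Real.pi/2 + δ)..Real.pi, F θ)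
      = ∫ x in (0:ℝ)..(Real.pi/2 - δ),
          Complex.exp (Complex.I * (t:ℂ) * (Real.sin x : ℂ)) * B2 (ρ * Real.cos (x - (-φ))) := by
    have h0 := intervalIntegral.integral_comp_sub_left (a := 0) (b := Real.pi/2 - δ) F Real.pi
    rw [show Real.pi - (Real.pi/2 - δ) = Real.pi/2 + δ by ring, sub_zero] at h0
    rw [← h0]
    apply intervalIntegral.integral_congr
    intro x _
    rw [hF_def]
    simp only
    rw [Real.sin_pi_sub]
    congr 1
    rw [hB2_def]
    simp only
    congr 1
    rw [show Real.pi - x - φ = Real.pi - (x + φ) by ring, Real.cos_pi_sub]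
    rw [show x - -φ = x + φ by ring]
    ring
  have hright : ‖∫ θ in (Real.pi/2 + δ)..Real.pi, F θ‖ ≤ (3*M + 2*L) / (t * Real.sin δ) := by
    rw [hrefl]
    have := SPB_side_bound B2 hB2 M hM2 t ht ρ hρ (-φ) δ L hδ0 hδ1 hL0 (by
      have := SPB_fL1 B2 hB2 hB2' ρ hρ (-φ)
      rwa [hL2] at this)
    exact this
  -- arithmetic
  have hkey : (3*M + 2*L) / (t * Real.sin δ) ≤ (4*M + 3*L) * δ := by
    have h2 : 0 < t * Real.sin δ := mul_pos ht0 hS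
    rw [div_le_iff₀ h2]
    have k1 : (t*δ)*((3/4)*δ) ≤ (t*δ)*Real.sin δ :=
      mul_le_mul_of_nonneg_left hsin.le (by positivity)
    nlinarith [htδδ, hM0, hL0, hδ0.le, mul_nonneg hM0 hδ0.le, mul_nonneg hL0 hδ0.le]
  calc ‖∫ θ in (0:ℝ)..Real.pi, F θ‖
      ≤ ‖(∫ θ in (0:ℝ)..(Real.pi/2 - δ), F θ)
          + (∫ θ in (Real.pi/2 - δ)..(Real.pi/2 + δ), F θ)‖
        + ‖∫ θ in (Real.pi/2 + δ)..Real.pi, F θ‖ := by rw [hsplit]; exact norm_add_le _ _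
    _ ≤ (‖∫ θ in (0:ℝ)..(Real.pi/2 - δ), F θ‖
          + ‖∫ θ in (Real.pi/2 - δ)..(Real.pi/2 + δ), F θ‖)
        + ‖∫ θ in (Real.pi/2 + δ)..Real.pi, F θ‖ := by gcongr; exact norm_add_le _ _
    _ ≤ ((4*M + 3*L) * δ + M * (2*δ)) + (4*M + 3*L) * δ := by
        gcongr
        · exact hleft.trans hkey
        · exact hright.trans hkey
    _ = (10*M + 6*L) * δ := by ring
    _ ≤ (10*M + 6*L + 1) * δ := by nlinarith
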